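/- Under the Entropy Setup, there exists a constant M > 0 depending only on γ such that for all ρ > 0 and m ∈ ℝ with u = m/ρ, |η̌_m(ρ,m)| ≤ M(|u| + ρ^θ) and |η̌_ρ(ρ,m)| ≤ M(|u|² + ρ^{2θ}). -/

import Mathlib

open MeasureTheory Real Set

noncomputable section

/-- The Lions–Perthame–Tadmor weak entropy
`η̌(ρ,m) = ∫_ℝ ½ s|s| [ρ^{2θ} − (m/ρ−s)²]_+^{(3−γ)/(2(γ−1))} ds`, with `2θ = γ−1`. -/
def etaCheck (γ ρ m : ℝ) : ℝ :=
  ∫ s : ℝ, (1/2) * s * |s| *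
    (max (ρ ^ (γ - 1) - (m / ρ - s) ^ (2:ℕ)) 0) ^ ((3 - γ) / (2 * (γ - 1)))

/-- The associated weak entropy flux
`q̌(ρ,m) = ∫_ℝ ½ s|s| (θs + (1−θ)m/ρ) [ρ^{2θ} − (m/ρ−s)²]_+^{(3−γ)/(2(γ−1))} ds`. -/
def qCheck (γ ρ m : ℝ) : ℝ :=
  ∫ s : ℝ, (1/2) * s * |s| * (((γ - 1)/2) * s + (1 - (γ - 1)/2) * (m / ρ)) *
    (max (ρ ^ (γ - 1) - (m / ρ - s) ^ (2:ℕ)) 0) ^ ((3 - γ) / (2 * (γ - 1)))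

/-- Partial derivative `η̌_ρ` in the variables `(ρ,m)`. -/
def etaCheckRho (γ ρ m : ℝ) : ℝ := deriv (fun x => etaCheck γ x m) ρ

/-- Partial derivative `η̌_m` in the variables `(ρ,m)`. -/
def etaCheckM (γ ρ m : ℝ) : ℝ := deriv (fun y => etaCheck γ ρ y) m

/-- The modified entropy `η̃(ρ,m) = η̌(ρ,m) − η̌_ρ(ρ̄,0)(ρ−ρ̄) − η̌_m(ρ̄,0)m`. -/
def etaTilde (γ ρbar ρ m : ℝ) : ℝ :=
  etaCheck γ ρ m - etaCheckRho γ ρbar 0 * (ρ - ρbar) - etaCheckM γ ρbar 0 * m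

/-- The modified entropy flux
`q̃(ρ,m) = q̌(ρ,m) − η̌_ρ(ρ̄,0)m − η̌_m(ρ̄,0)(m²/ρ + p(ρ))`, `p(ρ) = κρ^γ`. -/
def qTilde (γ κ ρbar ρ m : ℝ) : ℝ :=
  qCheck γ ρ m - etaCheckRho γ ρbar 0 * m
    - etaCheckM γ ρbar 0 * (m ^ (2:ℕ) / ρ + κ * ρ ^ γ)

/-- `η̃_ρ` in the variables `(ρ,m)`. -/
def etaTildeRho (γ ρbar ρ m : ℝ) : ℝ := deriv (fun x => etaTilde γ ρbar x m) ρ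

/-- `η̃_m` in the variables `(ρ,m)`. -/
def etaTildeM (γ ρbar ρ m : ℝ) : ℝ := deriv (fun y => etaTilde γ ρbar ρ y) m

namespace EtaAux

def K (α t : ℝ) : ℝ := (max (1 - t ^ (2:ℕ)) 0) ^ α

lemma K_nonneg (α t : ℝ) : 0 ≤ K α t := Real.rpow_nonneg (le_max_right _ _) _

lemma K_eq_zero {α : ℝ} (hα : α ≠ 0) {t : ℝ} (ht : 1 ≤ |t|) : K α t = 0 := by
  have h2 : 1 ≤ t ^ (2:ℕ) := by nlinarith [sq_abs t, abs_nonneg t]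
  have : max (1 - t ^ (2:ℕ)) 0 = 0 := max_eq_right (by linarith)
  rw [K, this, Real.zero_rpow hα]

lemma abs_le_of_K {α t : ℝ} (hα : α ≠ 0) (h : K α t ≠ 0) : |t| ≤ 1 := by
  by_contra hc
  exact h (K_eq_zero hα (le_of_lt (not_le.mp hc)))

lemma measurable_base : Measurable fun t : ℝ => max (1 - t ^ (2:ℕ)) 0 :=
  (measurable_const.sub (measurable_id.pow_const 2)).max measurable_const

lemma measurable_K {α : ℝ} (hα0 : α ≠ 0) : Measurable (K α) := by
  have hb := measurable_base
  have hrw : K α = fun t => if (max (1 - t ^ (2:ℕ)) 0) = 0 then 0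
      else Real.exp (Real.log (max (1 - t ^ (2:ℕ)) 0) * α) := by
    funext t
    by_cases h : max (1 - t ^ (2:ℕ)) 0 = 0
    · simp [K, h, Real.zero_rpow hα0]
    · have hpos : 0 < max (1 - t ^ (2:ℕ)) 0 := lt_of_le_of_ne (le_max_right _ _) (Ne.symm h)
      simp [K, h, Real.rpow_def_of_pos hpos]
  rw [hrw]
  exact Measurable.ite (hb (measurableSet_singleton 0)) measurable_const
    (Real.measurable_exp.comp ((Real.measurable_log.comp hb).mul_const α))

lemma integrable_K {α : ℝ} (hα1 : -1 < α) (hα0 : α ≠ 0) : Integrable (K α) := by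
  have hind : K α = (Ioo (-1:ℝ) 1).indicator (K α) := by
    funext t
    by_cases ht : t ∈ Ioo (-1:ℝ) 1
    · rw [Set.indicator_of_mem ht]
    · rw [Set.indicator_of_notMem ht]
      have : 1 ≤ |t| := by
        simp only [mem_Ioo, not_and_or, not_lt] at ht
        rcases ht with h | h
        · rw [abs_of_nonpos (by linarith)]; linarith
        · rw [abs_of_nonneg (by linarith)]; linarith
      exact K_eq_zero hα0 this
  rw [hind, integrable_indicator_iff measurableSet_Ioo]
  -- dominating function
  have hplus : IntegrableOn (fun t : ℝ => (1 + t) ^ α) (Ioo (-1:ℝ) 1) := by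
    have h0 : IntervalIntegrable (fun x : ℝ => x ^ α) volume 0 2 :=
      intervalIntegral.intervalIntegrable_rpow' hα1
    have h1 := h0.comp_add_right 1
    rw [intervalIntegrable_iff] at h1
    norm_num at h1
    have : IntegrableOn (fun x : ℝ => (x + 1) ^ α) (Ioo (-1:ℝ) 1) := by
      apply h1.mono_set
      exact Ioo_subset_Ioc_self
    exact this.congr_fun (fun x _ => by rw [add_comm]) measurableSet_Ioo
  have hminus : IntegrableOn (fun t : ℝ => (1 - t) ^ α) (Ioo (-1:ℝ) 1) := by
    have h0 : IntervalIntegrable (fun x : ℝ => x ^ α) volume 0 2 :=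
      intervalIntegral.intervalIntegrable_rpow' hα1
    have h1 := h0.comp_sub_left 1
    rw [intervalIntegrable_iff] at h1
    norm_num at h1
    apply h1.mono_set
    exact Ioo_subset_Ioc_self
  apply Integrable.mono' (hminus.add hplus) ((measurable_K hα0).aestronglyMeasurable)
  rw [ae_restrict_iff' measurableSet_Ioo]
  refine ae_of_all _ fun t ht => ?_
  have ha : (0:ℝ) < 1 - t := by linarith [ht.2]
  have hb : (0:ℝ) < 1 + t := by linarith [ht.1]
  have hmax : max (1 - t ^ (2:ℕ)) 0 = (1 - t) * (1 + t) := by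
    rw [max_eq_left (by nlinarith)]; ring
  have hK : K α t = (1 - t) ^ α * (1 + t) ^ α := by
    rw [K, hmax, Real.mul_rpow ha.le hb.le]
  rw [Real.norm_of_nonneg (K_nonneg α t), hK]
  simp only [Pi.add_apply]
  rcases le_or_gt 0 α with hs | hs
  · rcases le_total t 0 with htt | htt
    · have : (1 + t) ^ α ≤ 1 := Real.rpow_le_one hb.le (by linarith) hs
      nlinarith [Real.rpow_nonneg ha.le α, Real.rpow_nonneg hb.le α]
    · have : (1 - t) ^ α ≤ 1 := Real.rpow_le_one ha.le (by linarith) hs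
      nlinarith [Real.rpow_nonneg ha.le α, Real.rpow_nonneg hb.le α]
  · rcases le_total t 0 with htt | htt
    · have : (1 - t) ^ α ≤ 1 := Real.rpow_le_one_of_one_le_of_nonpos (by linarith) hs.le
      nlinarith [Real.rpow_nonneg ha.le α, Real.rpow_nonneg hb.le α]
    · have : (1 + t) ^ α ≤ 1 := Real.rpow_le_one_of_one_le_of_nonpos (by linarith) hs.le
      nlinarith [Real.rpow_nonneg ha.le α, Real.rpow_nonneg hb.le α]


lemma hasDerivAt_half (a : ℝ) : HasDerivAt (fun x : ℝ => (1/2) * (x * |x|)) |a| a := by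
  rcases lt_trichotomy a 0 with h | h | h
  · have he : (fun x : ℝ => -((1/2) * x ^ 2)) =ᶠ[nhds a] fun x => (1/2) * (x * |x|) := by
      filter_upwards [eventually_lt_nhds h] with x hx
      rw [abs_of_neg hx]; ring
    have : HasDerivAt (fun x : ℝ => -((1/2) * x ^ 2)) (-a) a := by
      simpa [Pi.neg_def] using ((hasDerivAt_pow 2 a).const_mul (1/2 : ℝ)).neg
    rw [abs_of_neg h]
    exact this.congr_of_eventuallyEq he.symm
  · subst h
    rw [hasDerivAt_iff_isLittleO]
    rw [Asymptotics.isLittleO_iff]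
    intro c hc
    filter_upwards [Metric.eventually_nhds_iff.2 ⟨2*c, by linarith, fun {x} hx => hx⟩] with x hx
    have hx' : |x - 0| < 2*c := by simpa [Real.dist_eq] using hx
    have h1 : ‖(1/2 : ℝ) * (x * |x|) - (1/2) * (0 * |(0:ℝ)|)‖ = (1/2) * (|x| * |x|) := by
      rw [abs_zero, mul_zero, mul_zero, sub_zero, Real.norm_eq_abs, abs_mul, abs_mul, abs_abs]
      norm_num
    calc ‖(fun x : ℝ => (1/2) * (x * |x|)) x - (fun x : ℝ => (1/2) * (x * |x|)) 0
            - (x - 0) • |(0:ℝ)|‖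
        = (1/2) * (|x| * |x|) := by simpa using h1
      _ ≤ c * ‖x - 0‖ := by
          rw [sub_zero] at hx' ⊢
          rw [Real.norm_eq_abs]
          nlinarith [abs_nonneg x, hx']
  · have he : (fun x : ℝ => (1/2) * x ^ 2) =ᶠ[nhds a] fun x => (1/2) * (x * |x|) := by
      filter_upwards [eventually_gt_nhds h] with x hx
      rw [abs_of_pos hx]; ring
    have : HasDerivAt (fun x : ℝ => (1/2) * x ^ 2) a a := by
      simpa using (hasDerivAt_pow 2 a).const_mul (1/2 : ℝ)
    rw [abs_of_pos h]
    exact this.congr_of_eventuallyEq he.symm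

def G (α v : ℝ) : ℝ := ∫ t, (1/2) * ((v - t) * |v - t|) * K α t

def G' (α v : ℝ) : ℝ := ∫ t, |v - t| * K α t

lemma abs_sub_le_K {α x t : ℝ} (hα0 : α ≠ 0) (h : K α t ≠ 0) : |x - t| ≤ |x| + 1 :=
  le_trans (abs_sub x t) (add_le_add_right (abs_le_of_K hα0 h) _)

lemma measurable_F {α : ℝ} (hα0 : α ≠ 0) (v : ℝ) :
    Measurable fun t => (1/2 : ℝ) * ((v - t) * |v - t|) * K α t := by
  have hc : Continuous fun t : ℝ => (1/2 : ℝ) * ((v - t) * |v - t|) := by fun_prop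
  exact hc.measurable.mul (measurable_K hα0)

lemma measurable_F' {α : ℝ} (hα0 : α ≠ 0) (v : ℝ) :
    Measurable fun t => |v - t| * K α t := by
  have hc : Continuous fun t : ℝ => |v - t| := by fun_prop
  exact hc.measurable.mul (measurable_K hα0)

lemma integrable_F {α : ℝ} (hα1 : -1 < α) (hα0 : α ≠ 0) (v : ℝ) :
    Integrable (fun t => (1/2 : ℝ) * ((v - t) * |v - t|) * K α t) := by
  apply Integrable.mono' ((integrable_K hα1 hα0).const_mul ((|v| + 1) ^ (2:ℕ)))
    (measurable_F hα0 v).aestronglyMeasurable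
  refine ae_of_all _ fun t => ?_
  by_cases h : K α t = 0
  · simp [h]
  · have h1 : |v - t| ≤ |v| + 1 := abs_sub_le_K hα0 h
    have hK := K_nonneg α t
    rw [Real.norm_eq_abs, abs_mul, abs_mul, abs_mul, abs_abs, abs_of_nonneg hK]
    have h2 : |(1/2 : ℝ)| = 1/2 := by norm_num
    rw [h2]
    have hAB : |v - t| * |v - t| ≤ (|v| + 1) * (|v| + 1) :=
      mul_le_mul h1 h1 (abs_nonneg _) (by positivity)
    nlinarith [mul_le_mul_of_nonneg_right hAB hK,
      mul_nonneg (mul_nonneg (abs_nonneg (v - t)) (abs_nonneg (v - t))) hK]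

lemma integrable_F' {α : ℝ} (hα1 : -1 < α) (hα0 : α ≠ 0) (v : ℝ) :
    Integrable (fun t => |v - t| * K α t) := by
  apply Integrable.mono' ((integrable_K hα1 hα0).const_mul (|v| + 1))
    (measurable_F' hα0 v).aestronglyMeasurable
  refine ae_of_all _ fun t => ?_
  by_cases h : K α t = 0
  · simp [h]
  · have h1 : |v - t| ≤ |v| + 1 := abs_sub_le_K hα0 h
    have hK := K_nonneg α t
    rw [Real.norm_eq_abs, abs_mul, abs_abs, abs_of_nonneg hK]
    exact mul_le_mul_of_nonneg_right h1 hK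

lemma G_hasDerivAt {α : ℝ} (hα1 : -1 < α) (hα0 : α ≠ 0) (v₀ : ℝ) :
    HasDerivAt (G α) (G' α v₀) v₀ := by
  have main := hasDerivAt_integral_of_dominated_loc_of_deriv_le (μ := volume)
    (F := fun v t => (1/2 : ℝ) * ((v - t) * |v - t|) * K α t)
    (F' := fun v t => |v - t| * K α t)
    (bound := fun t => (|v₀| + 2) * K α t)
    (x₀ := v₀) (s := Metric.ball v₀ 1) (Metric.ball_mem_nhds v₀ one_pos)
    (Filter.Eventually.of_forall fun v => (measurable_F hα0 v).aestronglyMeasurable)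
    (integrable_F hα1 hα0 v₀)
    (measurable_F' hα0 v₀).aestronglyMeasurable
    ?_ ((integrable_K hα1 hα0).const_mul _) ?_
  · exact main.2
  · refine ae_of_all _ fun t x hx => ?_
    by_cases h : K α t = 0
    · simp [h]
    · have h1 : |x - t| ≤ |x| + 1 := abs_sub_le_K hα0 h
      have h2 : |x| ≤ |v₀| + 1 := by
        have := mem_ball_iff_norm.mp hx
        rw [Real.norm_eq_abs] at this
        calc |x| = |v₀ + (x - v₀)| := by ring_nf
          _ ≤ |v₀| + |x - v₀| := abs_add_le _ _
          _ ≤ |v₀| + 1 := by linarith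
      have hK := K_nonneg α t
      rw [Real.norm_eq_abs, abs_mul, abs_abs, abs_of_nonneg hK]
      have : |x - t| ≤ |v₀| + 2 := by linarith
      exact mul_le_mul_of_nonneg_right this hK
  · refine ae_of_all _ fun t x _ => ?_
    have h0 : HasDerivAt (fun y : ℝ => (1/2 : ℝ) * ((y - t) * |y - t|)) |x - t| x := by
      have h1 := (hasDerivAt_half (x - t)).comp x ((hasDerivAt_id x).sub_const t)
      simpa [Function.comp_def] using h1
    exact h0.mul_const (K α t)

lemma G'_bound {α : ℝ} (hα1 : -1 < α) (hα0 : α ≠ 0) (v : ℝ) :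
    |G' α v| ≤ (|v| + 1) * ∫ t, K α t := by
  have h1 : |G' α v| ≤ ∫ t, ‖|v - t| * K α t‖ := by
    rw [← Real.norm_eq_abs]
    exact norm_integral_le_integral_norm _
  refine h1.trans ?_
  rw [show ((|v| + 1) * ∫ t, K α t) = ∫ t, (|v| + 1) * K α t from
    (MeasureTheory.integral_const_mul _ _).symm]
  apply integral_mono (integrable_F' hα1 hα0 v).norm
    ((integrable_K hα1 hα0).const_mul _)
  intro t
  dsimp only
  by_cases h : K α t = 0
  · simp [h]
  · have h2 : |v - t| ≤ |v| + 1 := abs_sub_le_K hα0 h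
    have hK := K_nonneg α t
    rw [Real.norm_eq_abs, abs_mul, abs_abs, abs_of_nonneg hK]
    exact mul_le_mul_of_nonneg_right h2 hK

lemma G_bound {α : ℝ} (hα1 : -1 < α) (hα0 : α ≠ 0) (v : ℝ) :
    |G α v| ≤ (|v| + 1) ^ (2:ℕ) * ∫ t, K α t := by
  have h1 : |G α v| ≤ ∫ t, ‖(1/2 : ℝ) * ((v - t) * |v - t|) * K α t‖ := by
    rw [← Real.norm_eq_abs]
    exact norm_integral_le_integral_norm _
  refine h1.trans ?_
  rw [show ((|v| + 1) ^ (2:ℕ) * ∫ t, K α t) = ∫ t, (|v| + 1) ^ (2:ℕ) * K α t from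
    (MeasureTheory.integral_const_mul _ _).symm]
  apply integral_mono (integrable_F hα1 hα0 v).norm
    ((integrable_K hα1 hα0).const_mul _)
  intro t
  dsimp only
  by_cases h : K α t = 0
  · simp [h]
  · have h2 : |v - t| ≤ |v| + 1 := abs_sub_le_K hα0 h
    have hK := K_nonneg α t
    rw [Real.norm_eq_abs, abs_mul, abs_mul, abs_mul, abs_abs, abs_of_nonneg hK]
    have h3 : |(1/2 : ℝ)| = 1/2 := by norm_num
    rw [h3]
    have hAB : |v - t| * |v - t| ≤ (|v| + 1) * (|v| + 1) :=
      mul_le_mul h2 h2 (abs_nonneg _) (by positivity)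
    nlinarith [mul_le_mul_of_nonneg_right hAB hK,
      mul_nonneg (mul_nonneg (abs_nonneg (v - t)) (abs_nonneg (v - t))) hK]

lemma intK_nonneg (α : ℝ) : 0 ≤ ∫ t, K α t := integral_nonneg (K_nonneg α)

lemma not_integrable_half_mul_abs : ¬ Integrable (fun s : ℝ => (1/2) * s * |s|) volume := by
  intro h
  have hIoi : IntegrableOn (fun s : ℝ => (1/2) * s * |s|) (Ioi (1:ℝ)) := h.integrableOn
  have h2 : IntegrableOn (fun s : ℝ => s ^ (2:ℝ)) (Ioi (1:ℝ)) := by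
    apply Integrable.mono' (hIoi.norm.const_mul 2)
      (Real.continuous_rpow_const (by norm_num)).aestronglyMeasurable
    rw [ae_restrict_iff' measurableSet_Ioi]
    refine ae_of_all _ fun s hs => ?_
    have hs0 : (0:ℝ) < s := lt_trans one_pos hs
    rw [Real.norm_eq_abs, Real.norm_eq_abs, Real.rpow_two,
      abs_of_pos (by positivity : (0:ℝ) < s ^ 2), abs_mul, abs_mul, abs_abs, abs_of_pos hs0]
    have : |(1/2 : ℝ)| = 1/2 := by norm_num
    rw [this]
    nlinarith
  rw [integrableOn_Ioi_rpow_iff zero_lt_one] at h2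
  norm_num at h2

end EtaAux


open EtaAux

lemma etaCheck_three (x y : ℝ) : etaCheck 3 x y = 0 := by
  have : etaCheck 3 x y = ∫ s : ℝ, (1/2) * s * |s| := by
    unfold etaCheck
    congr 1
    funext s
    rw [show ((3:ℝ) - 3) / (2 * (3 - 1)) = 0 by norm_num, Real.rpow_zero, mul_one]
  rw [this]
  exact integral_undef not_integrable_half_mul_abs

lemma etaCheck_scaling {γ : ℝ} (hγ : 1 < γ) {ρ : ℝ} (hρ : 0 < ρ) (m : ℝ) :
    etaCheck γ ρ m = ρ ^ γ *
      G ((3 - γ) / (2 * (γ - 1))) (m * (ρ ^ ((γ + 1)/2))⁻¹) := by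
  have hne : γ - 1 ≠ 0 := by linarith
  set α := (3 - γ) / (2 * (γ - 1)) with hαdef
  set θ := (γ - 1)/2 with hθdef
  set c := ρ ^ θ with hcdef
  have hc : 0 < c := Real.rpow_pos_of_pos hρ _
  set u := m / ρ with hudef
  set v := u / c with hvdef
  have huv : u = c * v := by rw [hvdef]; field_simp [hc.ne']
  have hcc : ρ ^ (γ - 1) = c * c := by
    rw [hcdef, ← Real.rpow_add hρ]
    congr 1
    rw [hθdef]; ring
  have hβ : ρ ^ ((γ + 1)/2) = ρ * c := by
    have h' : ρ ^ ((γ + 1)/2) = ρ ^ (1 + θ) := by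
      congr 1
      rw [hθdef]; ring
    rw [h', Real.rpow_add hρ, Real.rpow_one, hcdef]
  have hvβ : m * (ρ ^ ((γ + 1)/2))⁻¹ = v := by
    rw [hβ, hvdef, hudef]
    field_simp
  set f : ℝ → ℝ := fun s => (1/2) * s * |s| *
    (max (ρ ^ (γ - 1) - (u - s) ^ (2:ℕ)) 0) ^ α with hfdef
  have h0 : etaCheck γ ρ m = ∫ s, f s := rfl
  have hsub : (∫ t, f (u - c * t)) = c⁻¹ * ∫ s, f s := by
    have h1 : (∫ t, (fun w => f (u + w)) ((-c) * t)) = |(-c)⁻¹| • ∫ w, f (u + w) :=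
      MeasureTheory.Measure.integral_comp_mul_left (fun w => f (u + w)) (-c)
    have h2 : (∫ w, f (u + w)) = ∫ s, f s := MeasureTheory.integral_add_left_eq_self f u
    have h3 : (∫ t, f (u - c * t)) = ∫ t, (fun w => f (u + w)) ((-c) * t) := by
      congr 1
      funext t
      simp only [neg_mul, ← sub_eq_add_neg]
    rw [h3, h1, h2, abs_inv, abs_neg, abs_of_pos hc, smul_eq_mul]
  have hpt : ∀ t, f (u - c * t) =
      (c * c * (c * c) ^ α) * ((1/2) * ((v - t) * |v - t|) * K α t) := by
    intro t
    have e1 : ρ ^ (γ-1) - (u - (u - c*t)) ^ (2:ℕ) = (c*c) * (1 - t ^ (2:ℕ)) := by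
      rw [hcc]; ring
    have e3 : max ((c*c) * (1 - t ^ (2:ℕ))) 0 = (c*c) * max (1 - t ^ (2:ℕ)) 0 := by
      rw [mul_max_of_nonneg _ _ (by positivity : (0:ℝ) ≤ c*c), mul_zero]
    have e4 : u - c * t = c * (v - t) := by rw [huv]; ring
    show (1/2) * (u - c*t) * |u - c*t| *
        (max (ρ ^ (γ-1) - (u - (u - c*t)) ^ (2:ℕ)) 0) ^ α = _
    rw [e1, e3, Real.mul_rpow (by positivity) (le_max_right _ _), e4, abs_mul,
      abs_of_pos hc]
    unfold K
    ring
  have hint : (∫ t, f (u - c * t)) =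
      (c * c * (c * c) ^ α) * G α v := by
    rw [show (∫ t, f (u - c * t)) =
        ∫ t, (c * c * (c * c) ^ α) * ((1/2) * ((v - t) * |v - t|) * K α t) from by
      congr 1; funext t; exact hpt t]
    exact MeasureTheory.integral_const_mul _ _
  have hfactor : c * (c * c * (c * c) ^ α) = ρ ^ γ := by
    rw [← hcc, ← Real.rpow_mul hρ.le, hcdef, ← Real.rpow_add hρ, ← Real.rpow_add hρ]
    congr 1
    rw [hθdef, hαdef]
    field_simp
    ring
  have : (∫ s, f s) = c * ∫ t, f (u - c * t) := by
    rw [hsub]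
    field_simp
  rw [h0, this, hint, hvβ, ← mul_assoc, hfactor]



set_option maxHeartbeats 2000000 in
/-- there is `M > 0` depending only on `γ` with
`|η̌_m| ≤ M(|u| + ρ^θ)` and `|η̌_ρ| ≤ M(|u|² + ρ^{2θ})`, where `u = m/ρ`, `θ = (γ−1)/2`. -/
theorem etaCheck_derivative_bounds (γ : ℝ) (hγ : 1 < γ) :
    ∃ M : ℝ, 0 < M ∧ ∀ ρ : ℝ, 0 < ρ → ∀ m : ℝ,
      |etaCheckM γ ρ m| ≤ M * (|m / ρ| + ρ ^ ((γ - 1) / 2)) ∧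
      |etaCheckRho γ ρ m| ≤ M * (|m / ρ| ^ (2:ℕ) + ρ ^ (γ - 1)) := by
  by_cases hγ3 : γ = 3
  · subst hγ3
    refine ⟨1, one_pos, fun ρ hρ m => ?_⟩
    have hm : (fun y => etaCheck 3 ρ y) = fun _ => (0:ℝ) := funext fun y => etaCheck_three ρ y
    have hr : (fun x => etaCheck 3 x m) = fun _ => (0:ℝ) := funext fun x => etaCheck_three x m
    constructor
    · rw [etaCheckM, hm, deriv_const', abs_zero]
      positivity
    · rw [etaCheckRho, hr, deriv_const', abs_zero]
      positivity
  · set α := (3 - γ) / (2 * (γ - 1)) with hαdef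
    have hne : γ - 1 ≠ 0 := by intro h; linarith [hγ]
    have h2γ : (0:ℝ) < 2 * (γ - 1) := by linarith
    have hα1 : -1 < α := by
      rw [hαdef, lt_div_iff₀ h2γ]
      linarith
    have hα0 : α ≠ 0 := by
      rw [hαdef]
      intro h
      have := div_eq_zero_iff.mp h
      rcases this with h' | h'
      · exact hγ3 (by linarith)
      · linarith
    set cK := ∫ t, K α t with hcKdef
    have hcK0 : 0 ≤ cK := intK_nonneg α
    set β := (γ + 1)/2 with hβdef
    refine ⟨4 * γ * (cK + 1), by nlinarith, fun ρ hρ m => ?_⟩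
    set θ := (γ - 1)/2 with hθdef
    set c := ρ ^ θ with hcdef
    have hc : 0 < c := Real.rpow_pos_of_pos hρ _
    have hcc : ρ ^ (γ - 1) = c * c := by
      rw [hcdef, ← Real.rpow_add hρ]
      congr 1
      rw [hθdef]; ring
    have hβc : ρ ^ β = ρ * c := by
      have h' : ρ ^ β = ρ ^ (1 + θ) := by
        congr 1
        rw [hβdef, hθdef]; ring
      rw [h', Real.rpow_add hρ, Real.rpow_one, hcdef]
    have hβpos : (0:ℝ) < ρ ^ β := Real.rpow_pos_of_pos hρ _
    have hγc : ρ ^ γ = ρ * (c * c) := by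
      have h' : ρ ^ γ = ρ ^ (1 + (γ - 1)) := by
        congr 1
        ring
      rw [h', Real.rpow_add hρ, Real.rpow_one, hcc]
    set v := m * (ρ ^ β)⁻¹ with hvdef
    have hcv : c * |v| = |m / ρ| := by
      rw [hvdef, hβc, abs_mul, abs_inv, abs_mul, abs_of_pos hρ, abs_of_pos hc, abs_div,
        abs_of_pos hρ]
      field_simp
    -- m-derivative
    have hM : etaCheckM γ ρ m = ρ ^ γ * (G' α v * (ρ ^ β)⁻¹) := by
      have hfun : (fun y => etaCheck γ ρ y) = fun y => ρ ^ γ * G α (y * (ρ ^ β)⁻¹) := by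
        funext y
        rw [etaCheck_scaling hγ hρ y]
      have hinner : HasDerivAt (fun y : ℝ => y * (ρ ^ β)⁻¹) ((ρ ^ β)⁻¹) m :=
        hasDerivAt_mul_const _
      have hcomp := ((G_hasDerivAt hα1 hα0 v).comp m hinner).const_mul (ρ ^ γ)
      rw [etaCheckM, hfun]
      exact hcomp.deriv
    -- ρ-derivative
    have hR : etaCheckRho γ ρ m = γ * ρ ^ (γ-1) * G α v
        + ρ ^ γ * (G' α v * (m * (-(β * ρ ^ (β-1)) / (ρ ^ β) ^ 2))) := by
      have hA : HasDerivAt (fun x : ℝ => x ^ γ) (γ * ρ ^ (γ-1)) ρ :=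
        Real.hasDerivAt_rpow_const (Or.inl hρ.ne')
      have hB : HasDerivAt (fun x : ℝ => x ^ β) (β * ρ ^ (β-1)) ρ :=
        Real.hasDerivAt_rpow_const (Or.inl hρ.ne')
      have hBinv := hB.inv hβpos.ne'
      have hBm := hBinv.const_mul m
      have hGc := (G_hasDerivAt hα1 hα0 v).comp ρ hBm
      have hprod := hA.mul hGc
      have hev : (fun x => etaCheck γ x m) =ᶠ[nhds ρ]
          (fun x => x ^ γ * G α (m * (x ^ β)⁻¹)) := by
        filter_upwards [eventually_gt_nhds hρ] with x hx
        exact etaCheck_scaling hγ hx m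
      rw [etaCheckRho]
      exact (hprod.congr_of_eventuallyEq hev).deriv
    have hβθ : ρ ^ (β - 1) = c := by
      rw [hcdef]
      congr 1
      rw [hβdef, hθdef]; ring
    have hG'b := G'_bound hα1 hα0 v
    have hGb := G_bound hα1 hα0 v
    rw [← hcKdef] at hG'b hGb
    clear_value α cK β θ c v
    have hv0 : (0:ℝ) ≤ |v| := abs_nonneg v
    have hu0 : (0:ℝ) ≤ |m / ρ| := abs_nonneg _
    constructor
    · rw [hM]
      have e1 : ρ ^ γ * (G' α v * (ρ ^ β)⁻¹) = c * G' α v := by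
        rw [hγc, hβc]
        field_simp
      rw [e1, abs_mul, abs_of_pos hc]
      have h1 : c * |G' α v| ≤ c * ((|v| + 1) * cK) :=
        mul_le_mul_of_nonneg_left hG'b hc.le
      have h2 : c * ((|v| + 1) * cK) = cK * (|m / ρ| + c) := by
        rw [← hcv]; ring
      rw [h2] at h1
      refine h1.trans ?_
      have hX : (0:ℝ) ≤ |m / ρ| + c := by positivity
      nlinarith [mul_nonneg (mul_nonneg (by linarith : (0:ℝ) ≤ 4*γ-1) hcK0) hX,
        mul_nonneg (by linarith : (0:ℝ) ≤ 4*γ) hX]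
    · rw [hR]
      have hβ0 : (0:ℝ) < β := by rw [hβdef]; linarith
      have habs : |γ * ρ ^ (γ-1) * G α v
          + ρ ^ γ * (G' α v * (m * (-(β * ρ ^ (β-1)) / (ρ ^ β) ^ 2)))|
          ≤ γ * (c * c) * |G α v| + β * |m / ρ| * c * |G' α v| := by
        refine (abs_add_le _ _).trans ?_
        have t1 : |γ * ρ ^ (γ-1) * G α v| = γ * (c * c) * |G α v| := by
          rw [abs_mul, hcc, abs_of_nonneg (by nlinarith : (0:ℝ) ≤ γ * (c * c))]
        have earg : ρ ^ γ * (G' α v * (m * (-(β * ρ ^ (β-1)) / (ρ ^ β) ^ 2)))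
            = -(β * (m / ρ) * c * G' α v) := by
          rw [hγc, hβθ, hβc]
          field_simp
        have t2 : |ρ ^ γ * (G' α v * (m * (-(β * ρ ^ (β-1)) / (ρ ^ β) ^ 2)))|
            = β * |m / ρ| * c * |G' α v| := by
          rw [earg, abs_neg, abs_mul, abs_mul, abs_mul, abs_of_pos hβ0, abs_of_pos hc]
        rw [t1, t2]
      have hb1 : |G α v| ≤ (|v| + 1) ^ (2:ℕ) * cK := hGb
      have hb2 : |G' α v| ≤ (|v| + 1) * cK := hG'b
      have hβγ : β ≤ γ := by rw [hβdef]; linarith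
      have key : γ * (c * c) * |G α v| + β * |m / ρ| * c * |G' α v|
          ≤ 4 * γ * (cK + 1) * (|m / ρ| ^ (2:ℕ) + ρ ^ (γ - 1)) := by
        rw [hcc]
        have e2 : c * (|v| + 1) = |m / ρ| + c := by rw [← hcv]; ring
        have hGa0 : (0:ℝ) ≤ |G α v| := abs_nonneg _
        have hG'a0 : (0:ℝ) ≤ |G' α v| := abs_nonneg _
        have k1 : γ * (c * c) * |G α v| ≤ γ * ((|m / ρ| + c) ^ (2:ℕ) * cK) := by
          have h1 : (c * c) * |G α v| ≤ (c * c) * ((|v| + 1) ^ (2:ℕ) * cK) :=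
            mul_le_mul_of_nonneg_left hb1 (by positivity)
          have e3 : (c * c) * ((|v| + 1) ^ (2:ℕ) * cK) = (|m / ρ| + c) ^ (2:ℕ) * cK := by
            rw [← e2]; ring
          rw [e3] at h1
          have h2 := mul_le_mul_of_nonneg_left h1 (by linarith : (0:ℝ) ≤ γ)
          calc γ * (c * c) * |G α v| = γ * ((c * c) * |G α v|) := by ring
            _ ≤ γ * ((|m / ρ| + c) ^ (2:ℕ) * cK) := h2
        have k2 : β * |m / ρ| * c * |G' α v| ≤ β * (|m / ρ| * ((|m / ρ| + c) * cK)) := by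
          have h1 : c * |G' α v| ≤ (|m / ρ| + c) * cK := by
            have h0 : c * |G' α v| ≤ c * ((|v| + 1) * cK) :=
              mul_le_mul_of_nonneg_left hb2 hc.le
            have e4 : c * ((|v| + 1) * cK) = (|m / ρ| + c) * cK := by rw [← e2]; ring
            rw [e4] at h0; exact h0
          have h2 := mul_le_mul_of_nonneg_left h1 (mul_nonneg hβ0.le hu0)
          calc β * |m / ρ| * c * |G' α v| = (β * |m / ρ|) * (c * |G' α v|) := by ring
            _ ≤ (β * |m / ρ|) * ((|m / ρ| + c) * cK) := h2
            _ = β * (|m / ρ| * ((|m / ρ| + c) * cK)) := by ring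
        have hsq : (|m / ρ| + c) ^ (2:ℕ) ≤ 2 * (|m / ρ| ^ (2:ℕ) + c * c) := by
          nlinarith [sq_nonneg (|m / ρ| - c)]
        have hprod2 : |m / ρ| * (|m / ρ| + c) ≤ 2 * (|m / ρ| ^ (2:ℕ) + c * c) := by
          nlinarith [sq_nonneg (|m / ρ| - c), sq_nonneg (|m / ρ| + c)]
        have hY : (0:ℝ) ≤ |m / ρ| ^ (2:ℕ) + c * c := by positivity
        have hX0 : (0:ℝ) ≤ |m / ρ| + c := by positivity
        have f1 : γ * ((|m / ρ| + c) ^ (2:ℕ) * cK)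
            ≤ γ * (2 * (|m / ρ| ^ (2:ℕ) + c * c) * cK) :=
          mul_le_mul_of_nonneg_left (mul_le_mul_of_nonneg_right hsq hcK0)
            (by linarith : (0:ℝ) ≤ γ)
        have f2 : β * (|m / ρ| * ((|m / ρ| + c) * cK))
            ≤ γ * (2 * (|m / ρ| ^ (2:ℕ) + c * c) * cK) := by
          have ha : |m / ρ| * ((|m / ρ| + c) * cK)
              ≤ 2 * (|m / ρ| ^ (2:ℕ) + c * c) * cK := by
            have := mul_le_mul_of_nonneg_right hprod2 hcK0
            calc |m / ρ| * ((|m / ρ| + c) * cK) = |m / ρ| * (|m / ρ| + c) * cK := by ring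
              _ ≤ 2 * (|m / ρ| ^ (2:ℕ) + c * c) * cK := this
          exact mul_le_mul hβγ ha
            (mul_nonneg hu0 (mul_nonneg hX0 hcK0)) (by linarith : (0:ℝ) ≤ γ)
        have f4 : 4 * γ * cK * (|m / ρ| ^ (2:ℕ) + c * c)
            ≤ 4 * γ * (cK + 1) * (|m / ρ| ^ (2:ℕ) + c * c) := by
          nlinarith [mul_nonneg (by linarith : (0:ℝ) ≤ 4 * γ) hY]
        calc γ * (c * c) * |G α v| + β * |m / ρ| * c * |G' α v|
            ≤ γ * ((|m / ρ| + c) ^ (2:ℕ) * cK) + β * (|m / ρ| * ((|m / ρ| + c) * cK)) :=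
              add_le_add k1 k2
          _ ≤ γ * (2 * (|m / ρ| ^ (2:ℕ) + c * c) * cK)
              + γ * (2 * (|m / ρ| ^ (2:ℕ) + c * c) * cK) := add_le_add f1 f2
          _ = 4 * γ * cK * (|m / ρ| ^ (2:ℕ) + c * c) := by ring
          _ ≤ 4 * γ * (cK + 1) * (|m / ρ| ^ (2:ℕ) + c * c) := f4
      exact habs.trans key
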